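/- Let $R$ be a commutative ring, $n \geq 3$, and $I_1, \dots, I_n, V_1, \dots, V_n, x \in R$. Let $\mathcal{L}$ denote the tridiagonal $n \times n$ matrix with diagonal $(I_1 + V_n - x, I_2 + V_1 - x, \dots, I_n + V_{n-1} - x)$, superdiagonal all $1$, and subdiagonal $(I_1 V_1, \dots, I_{n-1} V_{n-1})$ (no corner entries). Denote by ${}^k\mathcal{L}_l$ the submatrix obtained by deleting the first $k$ and last $l$ rows and columns. Then $\det({}^1\mathcal{L}_1) \det(\mathcal{L}_2) - \det(\mathcal{L}_1) \det({}^1\mathcal{L}_2) = I_1 V_1 I_2 V_2 \cdots I_{n-2} V_{n-2}$. -/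

import Mathlib

/-- The tridiagonal `n × n` matrix `𝓛` with diagonal
`(I₁+Vₙ−x, I₂+V₁−x, …, Iₙ+Vₙ₋₁−x)`, superdiagonal all `1`, and subdiagonal
`(I₁V₁, …, Iₙ₋₁Vₙ₋₁)` (no corner entries). -/
def todaTri {R : Type*} [CommRing R] (n : ℕ) (I V : ℕ → R) (x : R) :
    Matrix (Fin n) (Fin n) R :=
  Matrix.of fun i j =>
    if (i : ℕ) = j then I ((i : ℕ) + 1) + V (if (i : ℕ) = 0 then n else (i : ℕ)) - x
    else if (i : ℕ) + 1 = j then 1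
    else if (j : ℕ) + 1 = i then I ((j : ℕ) + 1) * V ((j : ℕ) + 1)
    else 0

section Aux
variable {R : Type*} [CommRing R]

def tri (d c : ℕ → R) (m : ℕ) : Matrix (Fin m) (Fin m) R :=
  Matrix.of fun i j =>
    if (i : ℕ) = j then d i
    else if (i : ℕ) + 1 = j then 1
    else if (j : ℕ) + 1 = i then c j
    else 0

def triDet (d c : ℕ → R) : ℕ → R
  | 0 => 1
  | 1 => d 0
  | (m+2) => d (m+1) * triDet d c (m+1) - c m * triDet d c m

lemma tri_det (d c : ℕ → R) (m : ℕ) : (tri d c m).det = triDet d c m := by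
  have key : ∀ m, (tri d c m).det = triDet d c m ∧
      (tri d c (m+1)).det = triDet d c (m+1) := by
    intro m
    induction m with
    | zero =>
      constructor
      · simp [triDet, Matrix.det_fin_zero]
      · rw [show (0+1) = 1 from rfl, Matrix.det_fin_one]
        simp [tri, triDet]
    | succ m ih =>
      refine ⟨ih.2, ?_⟩
      set A := tri d c (m+1+1) with hA
      rw [Matrix.det_succ_row A (Fin.last (m+1))]
      rw [Fin.sum_univ_castSucc, Fin.sum_univ_castSucc]
      have hz : ∀ j : Fin m, ((-1 : R)) ^ ((Fin.last (m+1) : ℕ) + ((j.castSucc.castSucc : Fin (m+2)) : ℕ)) *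
          A (Fin.last (m+1)) j.castSucc.castSucc *
          (A.submatrix (Fin.last (m+1)).succAbove (j.castSucc.castSucc).succAbove).det = 0 := by
        intro j
        have : A (Fin.last (m+1)) j.castSucc.castSucc = 0 := by
          simp only [hA, tri, Matrix.of_apply, Fin.coe_castSucc, Fin.val_last]
          have := j.isLt
          rw [if_neg (by omega), if_neg (by omega), if_neg (by omega)]
        rw [this]; ring
      rw [Finset.sum_congr rfl (fun j _ => hz j), Finset.sum_const_zero, zero_add]
      -- last diagonal term
      have h1 : A.submatrix (Fin.last (m+1)).succAbove (Fin.last (m+1)).succAbove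
          = tri d c (m+1) := by
        rw [Fin.succAbove_last]
        ext i j
        simp [hA, tri]
      have hAll : A (Fin.last (m+1)) (Fin.last (m+1)) = d (m+1) := by
        simp [hA, tri]
      have hAlp : A (Fin.last (m+1)) ((Fin.last m).castSucc) = c m := by
        simp only [hA, tri, Matrix.of_apply, Fin.coe_castSucc, Fin.val_last]
        rw [if_neg (by omega), if_neg (by omega)]
        simp
      -- middle minor
      set B := A.submatrix (Fin.last (m+1)).succAbove ((Fin.last m).castSucc).succAbove with hB
      have hBdet : B.det = (tri d c m).det := by
        rw [Matrix.det_succ_column B (Fin.last m), Fin.sum_univ_castSucc]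
        have hz2 : ∀ i : Fin m, ((-1 : R)) ^ (((i.castSucc : Fin (m+1)) : ℕ) + ((Fin.last m : Fin (m+1)) : ℕ)) *
            B i.castSucc (Fin.last m) *
            (B.submatrix (i.castSucc).succAbove (Fin.last m).succAbove).det = 0 := by
          intro i
          have hcol : ((Fin.last m).castSucc : Fin (m+2)).succAbove (Fin.last m) = (Fin.last m).succ :=
            Fin.succAbove_of_le_castSucc _ _ (le_refl _)
          have : B i.castSucc (Fin.last m) = 0 := by
            rw [hB, Matrix.submatrix_apply, Fin.succAbove_last, hcol]
            simp only [hA, tri, Matrix.of_apply, Fin.coe_castSucc, Fin.val_succ, Fin.val_last]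
            have := i.isLt
            rw [if_neg (by omega), if_neg (by omega), if_neg (by omega)]
          rw [this]; ring
        rw [Finset.sum_congr rfl (fun i _ => hz2 i), Finset.sum_const_zero, zero_add]
        have hBll : B (Fin.last m) (Fin.last m) = 1 := by
          have hcol : ((Fin.last m).castSucc : Fin (m+2)).succAbove (Fin.last m) = (Fin.last m).succ :=
            Fin.succAbove_of_le_castSucc _ _ (le_refl _)
          rw [hB, Matrix.submatrix_apply, Fin.succAbove_last, hcol]
          simp only [hA, tri, Matrix.of_apply, Fin.coe_castSucc, Fin.val_succ, Fin.val_last]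
          rw [if_neg (by omega)]
          simp
        have hmin : B.submatrix (Fin.last m).succAbove (Fin.last m).succAbove = tri d c m := by
          rw [Fin.succAbove_last]
          ext i j
          have hcol2 : ((Fin.last m).castSucc : Fin (m+2)).succAbove (j.castSucc) = j.castSucc.castSucc :=
            Fin.succAbove_of_castSucc_lt _ _ (by
              simp [Fin.lt_def, j.isLt])
          rw [Matrix.submatrix_apply, hB, Matrix.submatrix_apply, Fin.succAbove_last, hcol2]
          simp [hA, tri]
        rw [hBll, hmin]
        have : ((-1 : R)) ^ ((Fin.last m : ℕ) + (Fin.last m : ℕ)) = 1 :=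
          Even.neg_one_pow ⟨m, by simp⟩
        rw [this]; ring
      rw [hBdet, h1, hAll, hAlp, ih.1, ih.2]
      have hs1 : ((-1 : R)) ^ ((Fin.last (m+1) : ℕ) + (((Fin.last m).castSucc : Fin (m+2)) : ℕ)) = -1 := by
        rw [Fin.val_last, Fin.coe_castSucc, Fin.val_last]
        exact Odd.neg_one_pow ⟨m, by omega⟩
      have hs2 : ((-1 : R)) ^ ((Fin.last (m+1) : ℕ) + ((Fin.last (m+1) : Fin (m+2)) : ℕ)) = 1 := by
        rw [Fin.val_last]
        exact Even.neg_one_pow ⟨m+1, rfl⟩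
      rw [hs1, hs2, show triDet d c (m+1+1) = d (m+1) * triDet d c (m+1) - c m * triDet d c m from rfl]
      ring
  exact (key m).1

lemma continuant (d c d' c' : ℕ → R) (hd : ∀ i, d' i = d (i+1)) (hc : ∀ i, c' i = c (i+1)) :
    ∀ m, triDet d' c' (m+1) * triDet d c (m+1) - triDet d c (m+2) * triDet d' c' m
      = ∏ i ∈ Finset.range (m+1), c i := by
  intro m
  induction m with
  | zero =>
    simp only [triDet, hd, Finset.range_one, Finset.prod_singleton, Nat.zero_add,
      Finset.prod_range_one]
    ring
  | succ m ih =>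
    rw [show triDet d' c' (m+1+1) = d' (m+1) * triDet d' c' (m+1) - c' m * triDet d' c' m from rfl,
      show triDet d c (m+1+2) = d (m+2) * triDet d c (m+2) - c (m+1) * triDet d c (m+1) from rfl,
      hd, hc, Finset.prod_range_succ, ← ih]
    ring

lemma prod_shift (F : ℕ → R) : ∀ m, ∏ i ∈ Finset.range m, F (i+1) = ∏ i ∈ Finset.Icc 1 m, F i := by
  intro m
  induction m with
  | zero => simp
  | succ m ih => rw [Finset.prod_range_succ, ih, Finset.prod_Icc_succ_top (by omega)]

lemma key_sub (n : ℕ) (I V : ℕ → R) (x : R) (a m : ℕ) (r : Fin m → Fin n)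
    (hr : ∀ k, ((r k : Fin n) : ℕ) = (k : ℕ) + a) :
    ((todaTri n I V x).submatrix r r).det
      = triDet (fun i => I (i + a + 1) + V (if i + a = 0 then n else i + a) - x)
          (fun i => I (i + a + 1) * V (i + a + 1)) m := by
  rw [← tri_det]
  congr 1
  ext i j
  simp only [todaTri, tri, Matrix.submatrix_apply, Matrix.of_apply, hr]
  split_ifs <;> first | rfl | omega

end Aux

/-- Lemma 2.10 of the paper (`keylemma2`):
`det(¹𝓛₁) det(𝓛₂) − det(𝓛₁) det(¹𝓛₂) = I₁V₁ I₂V₂ ⋯ Iₙ₋₂Vₙ₋₂`, where `ᵏ𝓛ₗ` deletes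
the first `k` and last `l` rows and columns of `𝓛`. -/
theorem stmt_14 {R : Type*} [CommRing R] (n : ℕ) (hn : 3 ≤ n) (I V : ℕ → R) (x : R) :
    ((todaTri n I V x).submatrix
        (fun k : Fin (n - 2) => (⟨(k : ℕ) + 1, by have := k.isLt; omega⟩ : Fin n))
        (fun k : Fin (n - 2) => (⟨(k : ℕ) + 1, by have := k.isLt; omega⟩ : Fin n))).det *
    ((todaTri n I V x).submatrix
        (fun k : Fin (n - 2) => (⟨(k : ℕ), by have := k.isLt; omega⟩ : Fin n))
        (fun k : Fin (n - 2) => (⟨(k : ℕ), by have := k.isLt; omega⟩ : Fin n))).det -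
    ((todaTri n I V x).submatrix
        (fun k : Fin (n - 1) => (⟨(k : ℕ), by have := k.isLt; omega⟩ : Fin n))
        (fun k : Fin (n - 1) => (⟨(k : ℕ), by have := k.isLt; omega⟩ : Fin n))).det *
    ((todaTri n I V x).submatrix
        (fun k : Fin (n - 3) => (⟨(k : ℕ) + 1, by have := k.isLt; omega⟩ : Fin n))
        (fun k : Fin (n - 3) => (⟨(k : ℕ) + 1, by have := k.isLt; omega⟩ : Fin n))).det =
    ∏ i ∈ Finset.Icc 1 (n - 2), I i * V i := by
  rw [key_sub n I V x 1 (n-2) _ (fun k => rfl),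
      key_sub n I V x 0 (n-2) _ (fun k => rfl),
      key_sub n I V x 0 (n-1) _ (fun k => rfl),
      key_sub n I V x 1 (n-3) _ (fun k => rfl)]
  have h2 : n - 2 = (n - 3) + 1 := by omega
  have h1 : n - 1 = (n - 3) + 2 := by omega
  rw [h2, h1]
  rw [continuant (fun i => I (i + 0 + 1) + V (if i + 0 = 0 then n else i + 0) - x)
      (fun i => I (i + 0 + 1) * V (i + 0 + 1))
      (fun i => I (i + 1 + 1) + V (if i + 1 = 0 then n else i + 1) - x)
      (fun i => I (i + 1 + 1) * V (i + 1 + 1))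
      (fun i => by simp only [Nat.add_zero])
      (fun i => by simp only [Nat.add_zero])
      (n - 3)]
  rw [← h2]
  simpa using prod_shift (fun j => I j * V j) (n - 2)
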